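/- arXiv:2402.10252 — 2 statements merged into one kernel-verified Lean document; each statement's English description precedes it below -/
import Mathlib

section
/- Let K be a gain matrix, A_K := A − BK, and for t, h, i ∈ ℤ_{≥0} with h ≤ t and i ≤ H + h define the disturbance-state transfer matrix Ψ_{t,i}^{K,h}(M_{t−h:t}) := A_K^i 1_{i≤h} + Σ_{j=0}^{h} A_K^j B M_{t−j}^[i−j−1] 1_{i−j ∈ [1,H]}. Then the state sequence {x_t} of the system x_{t+1} = A x_t + B u_t + w_t (with x_0 = 0) under the disturbance-action policies u_s = −K x_s + Σ_{i=1}^H M_s^[i−1] w_{s−i} for s = 0,…,T−1 satisfies, for every h ≤ t − 1, x_t = A_K^{h+1} x_{t−1−h} + Σ_{i=0}^{H+h} Ψ_{t−1,i}^{K,h}(M_{t−1−h:t−1}) w_{t−1−i}. -/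
open MeasureTheory Finset ProbabilityTheory

noncomputable section

namespace OnlineControl

abbrev Vec (n : ℕ) := EuclideanSpace ℝ (Fin n)
abbrev Mat (m n : ℕ) := Matrix (Fin m) (Fin n) ℝ
abbrev Param (H nu nx : ℕ) := EuclideanSpace ℝ (Fin H × Fin nu × Fin nx)

/-- A matrix acting on Euclidean vectors. -/
def mulVecE {m n : ℕ} (A : Mat m n) (v : Vec n) : Vec m := Matrix.toEuclideanLin A v

/-- Spectral norm (ℓ²-operator norm) of a real matrix. -/
def spec {m n : ℕ} (A : Mat m n) : ℝ :=
  ‖LinearMap.toContinuousLinearMap (Matrix.toEuclideanLin A)‖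

/-- Spectral norm (ℓ²-operator norm) of a complex matrix. -/
def specC {m n : ℕ} (A : Matrix (Fin m) (Fin n) ℂ) : ℝ :=
  ‖LinearMap.toContinuousLinearMap (Matrix.toEuclideanLin A)‖

/-- `(κ,γ)`-strong stability of a gain `K` for the system `(A, B)`. -/
def StronglyStable {nx nu : ℕ} (A : Mat nx nx) (B : Mat nx nu) (κ γ : ℝ)
    (K : Mat nu nx) : Prop :=
  ∃ P Q : Matrix (Fin nx) (Fin nx) ℂ,
    IsUnit Q ∧ (A - B * K).map (fun a => (a : ℂ)) = Q * P * Q⁻¹ ∧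
    specC P ≤ 1 - γ ∧ spec K ≤ κ ∧ specC Q ≤ κ ∧ specC Q⁻¹ ≤ κ

/-- `(κ,γ)`-diagonal strong stability. -/
def DiagStronglyStable {nx nu : ℕ} (A : Mat nx nx) (B : Mat nx nu) (κ γ : ℝ)
    (K : Mat nu nx) : Prop :=
  ∃ (d : Fin nx → ℂ) (Q : Matrix (Fin nx) (Fin nx) ℂ),
    IsUnit Q ∧ (A - B * K).map (fun a => (a : ℂ)) = Q * Matrix.diagonal d * Q⁻¹ ∧
    specC (Matrix.diagonal d) ≤ 1 - γ ∧ spec K ≤ κ ∧ specC Q ≤ κ ∧ specC Q⁻¹ ≤ κ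

/-- The `i`-th block `M^[i]` of a stacked disturbance-action parameter. -/
def blk {H nu nx : ℕ} (M : Param H nu nx) (i : Fin H) : Mat nu nx :=
  Matrix.of fun p q => M (i, p, q)

/-- The admissible set ℳ of disturbance-action policy parameters. -/
def MM (H nu nx : ℕ) (κB κ γ : ℝ) : Set (Param H nu nx) :=
  {M | ∀ i : Fin H, spec (blk M i) ≤ 2 * κB * κ ^ 3 * (1 - γ) ^ (i : ℕ)}

/-- Disturbance-state transfer matrix `Ψ_{t,i}^{K,h}(M_{t-h:t})`. -/
def Psi {nx nu H : ℕ} (A : Mat nx nx) (B : Mat nx nu) (K : Mat nu nx)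
    (M : ℤ → Param H nu nx) (t : ℤ) (i h : ℕ) : Mat nx nx :=
  (if i ≤ h then (A - B * K) ^ i else 0) +
    ∑ j ∈ Finset.range (h + 1),
      if hij : 1 ≤ i - j ∧ i - j ≤ H then
        (A - B * K) ^ j * B * blk (M (t - j)) ⟨i - j - 1, by omega⟩
      else 0

/-- Surrogate state `y_t^K(M_{t-1-H:t-1})`. -/
def ySur {nx nu H : ℕ} (A : Mat nx nx) (B : Mat nx nu) (K : Mat nu nx)
    (M : ℤ → Param H nu nx) (w : ℤ → Vec nx) (t : ℕ) : Vec nx :=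
  ∑ i ∈ Finset.range (2 * H + 1), mulVecE (Psi A B K M ((t : ℤ) - 1) i H) (w ((t : ℤ) - 1 - i))

/-- Surrogate input `v_t^K(M_{t-1-H:t})`. -/
def vSur {nx nu H : ℕ} (A : Mat nx nx) (B : Mat nx nu) (K : Mat nu nx)
    (M : ℤ → Param H nu nx) (w : ℤ → Vec nx) (t : ℕ) : Vec nu :=
  -(mulVecE K (ySur A B K M w t)) +
    ∑ i : Fin H, mulVecE (blk (M (t : ℤ)) i) (w ((t : ℤ) - 1 - (i : ℕ)))

/-- Surrogate cost `F_t(M_{t-1-H:t})`. -/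
def Fcost {nx nu H : ℕ} (c : ℕ → Vec nx → Vec nu → ℝ) (A : Mat nx nx) (B : Mat nx nu)
    (K : Mat nu nx) (M : ℤ → Param H nu nx) (w : ℤ → Vec nx) (t : ℕ) : ℝ :=
  c t (ySur A B K M w t) (vSur A B K M w t)

/-- `f_t(M) := F_t(M,…,M)`, as a function of the stacked parameter `M`. -/
def fcost {nx nu H : ℕ} (c : ℕ → Vec nx → Vec nu → ℝ) (A : Mat nx nx) (B : Mat nx nu)
    (K : Mat nu nx) (w : ℤ → Vec nx) (t : ℕ) : Param H nu nx → ℝ :=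
  fun M => Fcost c A B K (fun _ => M) w t

/-- The control input chosen by the disturbance-action policy `π_t(K, M_t)` at state `x`. -/
def dapCtrl {nx nu H : ℕ} (K : Mat nu nx) (M : ℤ → Param H nu nx) (w : ℤ → Vec nx)
    (t : ℕ) (x : Vec nx) : Vec nu :=
  -(mulVecE K x) + ∑ i : Fin H, mulVecE (blk (M (t : ℤ)) i) (w ((t : ℤ) - 1 - (i : ℕ)))

/-- The state trajectory generated by the disturbance-action policies from `x₀ = 0`. -/
def dapState {nx nu H : ℕ} (A : Mat nx nx) (B : Mat nx nu) (K : Mat nu nx)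
    (M : ℤ → Param H nu nx) (w : ℤ → Vec nx) : ℕ → Vec nx
  | 0 => 0
  | t + 1 =>
      mulVecE A (dapState A B K M w t) +
        mulVecE B (dapCtrl K M w t (dapState A B K M w t)) + w (t : ℤ)

/-- The input trajectory generated by the disturbance-action policies. -/
def dapInput {nx nu H : ℕ} (A : Mat nx nx) (B : Mat nx nu) (K : Mat nu nx)
    (M : ℤ → Param H nu nx) (w : ℤ → Vec nx) (t : ℕ) : Vec nu :=
  dapCtrl K M w t (dapState A B K M w t)

/-- The closed-loop state trajectory under the linear feedback `u_t = -K x_t` from `x₀ = 0`. -/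
def cls {nx nu : ℕ} (A : Mat nx nx) (B : Mat nx nu) (K : Mat nu nx)
    (w : ℤ → Vec nx) : ℕ → Vec nx
  | 0 => 0
  | t + 1 => mulVecE (A - B * K) (cls A B K w t) + w (t : ℤ)

/-- Frobenius norm of the Hessian of `f` at `x`, via second directional derivatives along
coordinate directions. -/
def hessFrob {ι : Type} [Fintype ι] [DecidableEq ι] (f : EuclideanSpace ℝ ι → ℝ)
    (x : EuclideanSpace ℝ ι) : ℝ :=
  Real.sqrt (∑ a, ∑ b,
    (iteratedFDeriv ℝ 2 f x ![EuclideanSpace.single a 1, EuclideanSpace.single b 1]) ^ 2)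

/-- Assumption 1: the costs are convex and differentiable with gradients bounded as
`‖∇_x c_t(x,u)‖ ≤ G_c ‖x‖`, `‖∇_u c_t(x,u)‖ ≤ G_c ‖u‖`, for `t ∈ ⟦0, T-1⟧`. -/
def Assumption1 {nx nu : ℕ} (c : ℕ → Vec nx → Vec nu → ℝ) (Gc : ℝ) (T : ℕ) : Prop :=
  1 ≤ Gc ∧ ∀ t < T,
    ConvexOn ℝ Set.univ (fun p : Vec nx × Vec nu => c t p.1 p.2) ∧
    Differentiable ℝ (fun p : Vec nx × Vec nu => c t p.1 p.2) ∧
    ∀ (x : Vec nx) (u : Vec nu),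
      ‖gradient (fun x' => c t x' u) x‖ ≤ Gc * ‖x‖ ∧
      ‖gradient (fun u' => c t x u') u‖ ≤ Gc * ‖u‖

/-- Assumption 2-(i): `E[‖w_t‖] ≤ σ_w` for all `t ≥ 0`. -/
def NoiseMoment1 {Ω : Type} [MeasurableSpace Ω] (μ : Measure Ω) {nx : ℕ}
    (w : ℤ → Ω → Vec nx) (σw : ℝ) : Prop :=
  0 ≤ σw ∧ ∀ t : ℤ, 0 ≤ t → (∫⁻ ω, (‖w t ω‖₊ : ENNReal) ∂μ) ≤ ENNReal.ofReal σw

/-- Assumption 2-(ii): `E[‖w_t‖⁴] ≤ σ_w⁴` for all `t ≥ 0`. -/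
def NoiseMoment4 {Ω : Type} [MeasurableSpace Ω] (μ : Measure Ω) {nx : ℕ}
    (w : ℤ → Ω → Vec nx) (σw : ℝ) : Prop :=
  0 ≤ σw ∧ ∀ t : ℤ, 0 ≤ t → (∫⁻ ω, (‖w t ω‖₊ : ENNReal) ^ 4 ∂μ) ≤ ENNReal.ofReal (σw ^ 4)

/-- Assumption 3: the costs are twice differentiable with `α I ⪯ ∇² c_t ⪯ β I`
for `t ∈ ⟦0, T-1⟧`. -/
def Assumption3 {nx nu : ℕ} (c : ℕ → Vec nx → Vec nu → ℝ) (α β : ℝ) (T : ℕ) : Prop :=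
  0 < α ∧ 0 < β ∧ ∀ t < T,
    ContDiff ℝ 2 (fun p : Vec nx × Vec nu => c t p.1 p.2) ∧
    ∀ (x : Vec nx) (u : Vec nu) (v : Vec nx × Vec nu),
      α * (‖v.1‖ ^ 2 + ‖v.2‖ ^ 2) ≤
          iteratedFDeriv ℝ 2 (fun p : Vec nx × Vec nu => c t p.1 p.2) (x, u) ![v, v] ∧
      iteratedFDeriv ℝ 2 (fun p : Vec nx × Vec nu => c t p.1 p.2) (x, u) ![v, v] ≤
          β * (‖v.1‖ ^ 2 + ‖v.2‖ ^ 2)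

/-- Assumption 4: `{w_t}_{t≥0}` is independent, zero-mean, coordinatewise `σ_w`-sub-Gaussian,
and non-degenerate: `E[w_t w_tᵀ] ⪰ σ̲² I`. -/
def Assumption4 {Ω : Type} [MeasurableSpace Ω] (μ : Measure Ω) {nx : ℕ}
    (w : ℤ → Ω → Vec nx) (σw σl : ℝ) : Prop :=
  0 ≤ σw ∧
  iIndepFun (fun t : ℕ => w t) μ ∧
  (∀ t : ℤ, 0 ≤ t → Integrable (w t) μ ∧ (∫ ω, w t ω ∂μ) = 0) ∧
  (∀ t : ℤ, 0 ≤ t → ∀ i : Fin nx, ∀ l : ℝ,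
    (∫⁻ ω, ENNReal.ofReal (Real.exp (l * w t ω i)) ∂μ) ≤
      ENNReal.ofReal (Real.exp (l ^ 2 * σw ^ 2 / (2 * nx)))) ∧
  0 < σl ∧
  (∀ t : ℤ, 0 ≤ t → ∀ v : Vec nx,
    ENNReal.ofReal (σl ^ 2 * ‖v‖ ^ 2) ≤
      ∫⁻ ω, ENNReal.ofReal ((inner ℝ (w t ω) v : ℝ) ^ 2) ∂μ)

end OnlineControl

open OnlineControl

section Aux

variable {nx nu H : ℕ} (A : Mat nx nx) (B : Mat nx nu) (K : Mat nu nx)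
  (M : ℤ → Param H nu nx) (w : ℤ → Vec nx)

theorem mulVecE_mul {m n k : ℕ} (X : Mat m n) (Y : Mat n k) (v : Vec k) :
    mulVecE (X * Y) v = mulVecE X (mulVecE Y v) := by
  simp [mulVecE, Matrix.toEuclideanLin_apply]

theorem mulVecE_one {n : ℕ} (v : Vec n) : mulVecE 1 v = v := by
  simp [mulVecE, Matrix.toEuclideanLin_apply, Matrix.one_mulVec]

theorem mulVecE_zeroM {m n : ℕ} (v : Vec n) : mulVecE (0 : Mat m n) v = 0 := by
  simp [mulVecE]

theorem mulVecE_addM {m n : ℕ} (X Y : Mat m n) (v : Vec n) :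
    mulVecE (X + Y) v = mulVecE X v + mulVecE Y v := by simp [mulVecE]

theorem mulVecE_subM {m n : ℕ} (X Y : Mat m n) (v : Vec n) :
    mulVecE (X - Y) v = mulVecE X v - mulVecE Y v := by simp [mulVecE]

theorem mulVecE_add {m n : ℕ} (X : Mat m n) (v v' : Vec n) :
    mulVecE X (v + v') = mulVecE X v + mulVecE X v' := by simp [mulVecE]

theorem mulVecE_neg {m n : ℕ} (X : Mat m n) (v : Vec n) :
    mulVecE X (-v) = -mulVecE X v := by simp [mulVecE]

theorem mulVecE_sum {m n : ℕ} (X : Mat m n) {ι : Type*} (s : Finset ι) (f : ι → Vec n) :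
    mulVecE X (∑ i ∈ s, f i) = ∑ i ∈ s, mulVecE X (f i) := by simp [mulVecE]

theorem psi_zero (τ : ℤ) (i : ℕ) :
    Psi A B K M τ i 0 = (if i = 0 then 1 else 0) +
      (if hij : 1 ≤ i ∧ i ≤ H then B * blk (M τ) ⟨i - 1, by omega⟩ else 0) := by
  unfold Psi
  rcases Nat.eq_zero_or_pos i with hi | hi
  · subst hi; simp
  · rw [if_neg (by omega), if_neg (by omega), Finset.sum_range_one]
    simp

theorem psi_top (τ : ℤ) (h : ℕ) : Psi A B K M τ (H + h + 1) h = 0 := by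
  unfold Psi
  rw [if_neg (by omega), Finset.sum_eq_zero, add_zero]
  intro j hj
  rw [Finset.mem_range] at hj
  rw [dif_neg (by omega)]

theorem psi_succ (τ : ℤ) (i h : ℕ) :
    Psi A B K M τ i (h + 1) = Psi A B K M τ i h +
      (if h + 1 ≤ i then
        (A - B * K) ^ (h + 1) * Psi A B K M (τ - ((h : ℤ) + 1)) (i - (h + 1)) 0 else 0) := by
  have hcast : τ - ((h : ℤ) + 1) = τ - ((h + 1 : ℕ) : ℤ) := by push_cast; ring
  rw [hcast, psi_zero]
  unfold Psi
  rw [Finset.sum_range_succ]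
  rcases Nat.lt_trichotomy i (h + 1) with hi | hi | hi
  · have c1 : i ≤ h + 1 := by omega
    have c2 : i ≤ h := by omega
    have c3 : ¬(1 ≤ i - (h + 1) ∧ i - (h + 1) ≤ H) := by omega
    have c4 : ¬(h + 1 ≤ i) := by omega
    rw [if_pos c1, if_pos c2, dif_neg c3, if_neg c4, add_zero, add_zero]
  · subst hi
    have c2 : ¬(h + 1 ≤ h) := by omega
    have c3 : ¬(1 ≤ h + 1 - (h + 1) ∧ h + 1 - (h + 1) ≤ H) := by omega
    rw [if_pos (le_refl (h + 1)), if_neg c2, dif_neg c3, if_pos (le_refl (h + 1))]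
    simp only [Nat.sub_self]
    rw [if_pos trivial, dif_neg (show ¬(1 ≤ 0 ∧ 0 ≤ H) by omega)]
    rw [add_zero, add_zero, mul_one, zero_add]
    abel
  · have c1 : ¬(i ≤ h + 1) := by omega
    have c2 : ¬(i ≤ h) := by omega
    have c4 : h + 1 ≤ i := by omega
    have c5 : ¬(i - (h + 1) = 0) := by omega
    rw [if_neg c1, if_neg c2, if_pos c4, if_neg c5]
    by_cases hC : 1 ≤ i - (h + 1) ∧ i - (h + 1) ≤ H
    · rw [dif_pos hC, dif_pos hC, zero_add, zero_add, zero_add, Matrix.mul_assoc]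
    · rw [dif_neg hC, dif_neg hC, add_zero, zero_add, zero_add, mul_zero, add_zero]

theorem dap_step (t : ℕ) :
    dapState A B K M w (t + 1) =
      mulVecE ((A - B * K) ^ 1) (dapState A B K M w t) +
        ∑ i ∈ Finset.range (H + 1),
          mulVecE (Psi A B K M (t : ℤ) i 0) (w ((t : ℤ) - i)) := by
  have h0 : Psi A B K M (t : ℤ) 0 0 = 1 := by
    rw [psi_zero, if_pos rfl, dif_neg (show ¬(1 ≤ 0 ∧ 0 ≤ H) by omega), add_zero]
  have key : ∑ i ∈ Finset.range (H + 1),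
      mulVecE (Psi A B K M (t : ℤ) i 0) (w ((t : ℤ) - i)) =
      w (t : ℤ) + ∑ i : Fin H, mulVecE (B * blk (M (t : ℤ)) i) (w ((t : ℤ) - 1 - (i : ℕ))) := by
    rw [Finset.sum_range_succ']
    rw [Finset.sum_range
      (fun k => mulVecE (Psi A B K M (t : ℤ) (k + 1) 0) (w ((t : ℤ) - (k + 1 : ℕ))))]
    rw [add_comm]
    congr 1
    · rw [h0, mulVecE_one]
      norm_num
    · refine Finset.sum_congr rfl fun i _ => ?_
      have hiH : (i : ℕ) < H := i.isLt
      have hpsi : Psi A B K M (t : ℤ) ((i : ℕ) + 1) 0 = B * blk (M (t : ℤ)) i := by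
        rw [psi_zero, if_neg (by omega), dif_pos ⟨by omega, by omega⟩, zero_add]
        congr 1
      rw [hpsi]
      have hcc : (t : ℤ) - (((i : ℕ) + 1 : ℕ) : ℤ) = (t : ℤ) - 1 - ((i : ℕ) : ℤ) := by
        push_cast; ring
      rw [hcc]
  rw [key]
  simp only [dapState, dapCtrl]
  rw [mulVecE_add, mulVecE_neg, mulVecE_sum, pow_one, mulVecE_subM, mulVecE_mul]
  simp only [mulVecE_mul]
  abel

end Aux

/-- Proposition 1: evolution of the state under disturbance-action
policies in terms of the disturbance-state transfer matrices. -/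
theorem state_evolution_disturbance_action
    {nx nu H : ℕ} (A : Mat nx nx) (B : Mat nx nu) (K : Mat nu nx)
    (M : ℤ → Param H nu nx) (w : ℤ → Vec nx)
    (hw0 : ∀ s : ℤ, s < 0 → w s = 0) :
    ∀ t h : ℕ, h + 1 ≤ t →
      dapState A B K M w t =
        mulVecE ((A - B * K) ^ (h + 1)) (dapState A B K M w (t - 1 - h)) +
          ∑ i ∈ Finset.range (H + h + 1),
            mulVecE (Psi A B K M ((t : ℤ) - 1) i h) (w ((t : ℤ) - 1 - i)) := by
  have base : ∀ s : ℕ, dapState A B K M w (s + 1) =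
      mulVecE ((A - B * K) ^ 1) (dapState A B K M w s) +
        ∑ i ∈ Finset.range (H + 0 + 1),
          mulVecE (Psi A B K M ((s : ℤ)) i 0) (w ((s : ℤ) - i)) := by
    intro s; simpa using dap_step A B K M w s
  intro t h
  induction h with
  | zero =>
    intro ht
    obtain ⟨s, rfl⟩ : ∃ s, t = s + 1 := ⟨t - 1, by omega⟩
    have hc : ((s + 1 : ℕ) : ℤ) - 1 = (s : ℤ) := by push_cast; ring
    simpa [hc] using base s
  | succ h ih =>
    intro ht
    have ih' := ih (by omega)
    set τ : ℤ := (t : ℤ) - 1 with hτ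
    obtain ⟨s, hs⟩ : ∃ s, t - 1 - h = s + 1 := ⟨t - 2 - h, by omega⟩
    have hs' : t - 1 - (h + 1) = s := by omega
    have hτs : τ - ((h : ℤ) + 1) = (s : ℤ) := by
      have h2 : (s : ℤ) = (t : ℤ) - 2 - h := by omega
      rw [hτ, h2]; ring
    rw [hs] at ih'
    rw [hs', ih', base s]
    have hpsum : ∑ i ∈ Finset.range (H + (h + 1) + 1),
        mulVecE (Psi A B K M τ i (h + 1)) (w (τ - i)) =
        (∑ i ∈ Finset.range (H + h + 1), mulVecE (Psi A B K M τ i h) (w (τ - i))) +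
        ∑ k ∈ Finset.range (H + 0 + 1),
          mulVecE ((A - B * K) ^ (h + 1))
            (mulVecE (Psi A B K M ((s : ℤ)) k 0) (w ((s : ℤ) - k))) := by
      have e1 : ∀ i : ℕ, mulVecE (Psi A B K M τ i (h + 1)) (w (τ - i)) =
          mulVecE (Psi A B K M τ i h) (w (τ - i)) +
          (if h + 1 ≤ i then
            mulVecE ((A - B * K) ^ (h + 1) * Psi A B K M (τ - ((h : ℤ) + 1)) (i - (h + 1)) 0)
              (w (τ - i)) else 0) := by
        intro i
        rw [psi_succ, mulVecE_addM]
        congr 1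
        split_ifs with hc
        · rfl
        · exact mulVecE_zeroM _
      rw [Finset.sum_congr rfl fun i _ => e1 i, Finset.sum_add_distrib]
      congr 1
      · rw [show H + (h + 1) + 1 = (H + h + 1) + 1 by ring, Finset.sum_range_succ,
          psi_top, mulVecE_zeroM, add_zero]
      · rw [show H + (h + 1) + 1 = (h + 1) + (H + 1) by ring, Finset.sum_range_add]
        rw [Finset.sum_eq_zero fun i hi => by
          rw [if_neg (show ¬(h + 1 ≤ i) by rw [Finset.mem_range] at hi; omega)], zero_add]
        refine Finset.sum_congr (by rw [Nat.add_zero]) fun k _ => ?_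
        have e2 : h + 1 + k - (h + 1) = k := by omega
        have e3 : τ - ((h + 1 + k : ℕ) : ℤ) = (s : ℤ) - k := by
          rw [← hτs]; push_cast; ring
        rw [if_pos (Nat.le_add_right (h + 1) k), e2, hτs, e3, mulVecE_mul]
    rw [hpsum, mulVecE_add, ← mulVecE_mul, ← pow_add, mulVecE_sum]
    abel
end
end

section
/- Let K be (κ,γ)-strongly stable and suppose M_t ∈ ℳ for all t ∈ ℤ_{≥0}. Then for any h, i ∈ ℤ_{≥0} and any t ≥ h, the disturbance-state transfer matrix satisfies ‖Ψ_{t,i}^{K,h}(M_{t−h:t})‖ ≤ κ²(1−γ)^i 1_{i≤h} + 2H κ_B² κ⁵ (1−γ)^{i−1}; in particular ‖Ψ_{t,i}^{K,h}(M_{t−h:t})‖ ≤ (2H+1) κ_B² κ⁵ (1−γ)^{i−1}. -/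
open MeasureTheory Finset ProbabilityTheory

noncomputable section

open OnlineControl


namespace OnlineControl

open scoped Matrix.Norms.L2Operator

lemma spec_eq' {m n : ℕ} (A : Mat m n) : spec A = ‖A‖ := rfl
lemma specC_eq' {m n : ℕ} (A : Matrix (Fin m) (Fin n) ℂ) : specC A = ‖A‖ := rfl

lemma spec_nonneg {m n : ℕ} (A : Mat m n) : 0 ≤ spec A := norm_nonneg A

lemma spec_zero {m n : ℕ} : spec (0 : Mat m n) = 0 := by rw [spec_eq']; exact norm_zero

lemma spec_mul_le {m n l : ℕ} (X : Mat m n) (Y : Mat n l) : spec (X * Y) ≤ spec X * spec Y :=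
  Matrix.l2_opNorm_mul X Y

lemma spec_add_le {m n : ℕ} (X Y : Mat m n) : spec (X + Y) ≤ spec X + spec Y := norm_add_le X Y

lemma spec_sum_le {m n : ℕ} {ι : Type*} (s : Finset ι) (f : ι → Mat m n) :
    spec (∑ j ∈ s, f j) ≤ ∑ j ∈ s, spec (f j) := norm_sum_le s f

lemma spec_le_specC {m n : ℕ} (A : Mat m n) : spec A ≤ specC (A.map (fun a => (a : ℂ))) := by
  rw [spec_eq', specC_eq', Matrix.l2_opNorm_def]
  refine ContinuousLinearMap.opNorm_le_bound _ (norm_nonneg _) fun v => ?_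
  set vC : EuclideanSpace ℂ (Fin n) := (WithLp.equiv 2 _).symm (fun k => (v k : ℂ)) with hvC
  have hnv : ‖vC‖ = ‖v‖ := by
    rw [EuclideanSpace.norm_eq, EuclideanSpace.norm_eq]
    congr 1
    refine Finset.sum_congr rfl fun k _ => ?_
    simp [hvC, WithLp.equiv_symm_apply, PiLp.toLp_apply]
  have key : ‖Matrix.toEuclideanLin A v‖
      = ‖Matrix.toEuclideanLin (A.map (fun a => (a : ℂ))) vC‖ := by
    rw [EuclideanSpace.norm_eq, EuclideanSpace.norm_eq]
    congr 1
    refine Finset.sum_congr rfl fun k _ => ?_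
    have hmv : (Matrix.toEuclideanLin (A.map (fun a => (a : ℂ))) vC) k
        = ((Matrix.toEuclideanLin A v) k : ℂ) := by
      simp only [Matrix.toEuclideanLin_apply, WithLp.equiv_symm_apply, PiLp.toLp_apply, hvC]
      have := (RingHom.map_mulVec (Complex.ofRealHom) A (fun j => v j) k).symm
      exact this
    rw [hmv, Complex.norm_real]
  show ‖Matrix.toEuclideanLin A v‖ ≤ _
  rw [key, ← hnv]
  exact Matrix.l2_opNorm_mulVec _ vC

lemma spec_one_le {n : ℕ} : spec (1 : Mat n n) ≤ 1 := by
  rw [spec_eq', Matrix.l2_opNorm_def]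
  refine ContinuousLinearMap.opNorm_le_bound _ zero_le_one fun v => ?_
  have : ‖Matrix.toEuclideanLin (1 : Mat n n) v‖ = ‖v‖ := by
    rw [Matrix.toEuclideanLin_apply, Matrix.one_mulVec]
  calc ‖(LinearMap.toContinuousLinearMap (Matrix.toEuclideanLin (1 : Mat n n))) v‖
      = ‖v‖ := this
    _ ≤ 1 * ‖v‖ := by simp

lemma spec_pow_le {nx nu : ℕ} {A : Mat nx nx} {B : Mat nx nu} {κ γ : ℝ} {K : Mat nu nx}
    (hκ : 1 ≤ κ) (hγ1 : γ < 1) (hK : StronglyStable A B κ γ K) (i : ℕ) :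
    spec ((A - B * K) ^ i) ≤ κ ^ 2 * (1 - γ) ^ i := by
  obtain ⟨P, Q, hQ, hfac, hP, -, hQn, hQin⟩ := hK
  have hκ0 : (0:ℝ) ≤ κ := le_trans zero_le_one hκ
  rcases Nat.eq_zero_or_pos i with rfl | hi
  · simpa using le_trans spec_one_le (by nlinarith)
  obtain ⟨u, hu⟩ := hQ
  have hinv : Q⁻¹ = (↑u⁻¹ : Matrix (Fin nx) (Fin nx) ℂ) := by
    rw [Matrix.coe_units_inv, hu]
  have hmap : ((A - B * K) ^ i).map (fun a => (a : ℂ))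
      = ((A - B * K).map (fun a => (a : ℂ))) ^ i := by
    have := map_pow (RingHom.mapMatrix (Complex.ofRealHom)) (A - B * K) i
    simp only [RingHom.mapMatrix_apply] at this
    exact this
  have hPi : ‖P ^ i‖ ≤ (1 - γ) ^ i :=
    le_trans (norm_pow_le' P hi) (pow_le_pow_left₀ (norm_nonneg _) hP i)
  have h1γ : (0:ℝ) ≤ (1 - γ) ^ i := pow_nonneg (by linarith) i
  calc spec ((A - B * K) ^ i)
      ≤ specC (((A - B * K) ^ i).map (fun a => (a : ℂ))) := spec_le_specC _
    _ = specC (Q * P ^ i * Q⁻¹) := by rw [hmap, hfac, hinv, ← hu, Units.conj_pow]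
    _ ≤ ‖Q‖ * ‖P ^ i‖ * ‖Q⁻¹‖ := by
        rw [specC_eq']
        exact le_trans (norm_mul_le _ _)
          (mul_le_mul_of_nonneg_right (norm_mul_le _ _) (norm_nonneg _))
    _ ≤ κ * ((1 - γ) ^ i) * κ := by
        have hQn' : ‖Q‖ ≤ κ := hQn
        have hQin' : ‖Q⁻¹‖ ≤ κ := hQin
        exact mul_le_mul (mul_le_mul hQn' hPi (norm_nonneg _) hκ0) hQin' (norm_nonneg _)
          (by nlinarith)
    _ = κ ^ 2 * (1 - γ) ^ i := by ring

end OnlineControl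

/-- bound on the disturbance-state transfer matrix for admissible policy
parameters. -/
theorem psi_norm_bound
    {nx nu H : ℕ} (A : Mat nx nx) (B : Mat nx nu) (κ γ κB : ℝ) (K : Mat nu nx)
    (M : ℤ → Param H nu nx)
    (hκ : 1 ≤ κ) (hγ0 : 0 < γ) (hγ1 : γ < 1) (hκB : κB = max (spec B) 1)
    (hK : StronglyStable A B κ γ K)
    (hM : ∀ s : ℤ, 0 ≤ s → M s ∈ MM H nu nx κB κ γ) :
    ∀ (h i : ℕ) (t : ℤ), (h : ℤ) ≤ t →
      spec (Psi A B K M t i h) ≤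
        (if i ≤ h then κ ^ 2 * (1 - γ) ^ i else 0) +
          2 * H * κB ^ 2 * κ ^ 5 * (1 - γ) ^ ((i : ℤ) - 1) ∧
      spec (Psi A B K M t i h) ≤ (2 * H + 1) * κB ^ 2 * κ ^ 5 * (1 - γ) ^ ((i : ℤ) - 1) := by
  
  have hγ' : (0:ℝ) < 1 - γ := by linarith
  have hγ1' : (1:ℝ) - γ ≤ 1 := by linarith
  have hκ0 : (0:ℝ) ≤ κ := by linarith
  have hκB1 : (1:ℝ) ≤ κB := by rw [hκB]; exact le_max_right _ _
  have hκB0 : (0:ℝ) ≤ κB := by linarith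
  have hB : spec B ≤ κB := by rw [hκB]; exact le_max_left _ _
  intro h i t ht
  set z : ℝ := (1 - γ) ^ ((i:ℤ) - 1) with hz
  have hz0 : (0:ℝ) ≤ z := (zpow_pos hγ' _).le
  have hC0 : (0:ℝ) ≤ 2 * κB ^ 2 * κ ^ 5 * z := by
    have h1 : (0:ℝ) ≤ κB ^ 2 := by positivity
    have h2 : (0:ℝ) ≤ κ ^ 5 := by positivity
    have := mul_nonneg (mul_nonneg (mul_nonneg (by norm_num : (0:ℝ) ≤ 2) h1) h2) hz0
    linarith
  -- split Psi
  have hPsi : Psi A B K M t i h =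
      (if i ≤ h then (A - B * K) ^ i else 0) +
        ∑ j ∈ Finset.range (h + 1),
          if hij : 1 ≤ i - j ∧ i - j ≤ H then
            (A - B * K) ^ j * B * blk (M (t - j)) ⟨i - j - 1, by omega⟩
          else 0 := rfl
  -- bound on the first summand
  have hfirst : spec (if i ≤ h then (A - B * K) ^ i else 0)
      ≤ if i ≤ h then κ ^ 2 * (1 - γ) ^ i else 0 := by
    split
    · exact spec_pow_le hκ hγ1 hK i
    · exact le_of_eq spec_zero
  -- bound on each term of the sum
  have hterm : ∀ j ∈ Finset.range (h + 1),
      spec (if hij : 1 ≤ i - j ∧ i - j ≤ H then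
          (A - B * K) ^ j * B * blk (M (t - j)) ⟨i - j - 1, by omega⟩
        else 0)
      ≤ if 1 ≤ i - j ∧ i - j ≤ H then 2 * κB ^ 2 * κ ^ 5 * z else 0 := by
    intro j hj
    by_cases hij : 1 ≤ i - j ∧ i - j ≤ H
    · rw [dif_pos hij, if_pos hij]
      have hjh : j ≤ h := by
        have := Finset.mem_range.mp hj; omega
      have hts : (0:ℤ) ≤ t - (j:ℤ) := by omega
      have hMm := hM (t - (j:ℤ)) hts ⟨i - j - 1, by omega⟩
      have h1 : spec ((A - B * K) ^ j) ≤ κ ^ 2 * (1 - γ) ^ j := spec_pow_le hκ hγ1 hK j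
      have hγj : (0:ℝ) ≤ (1 - γ) ^ j := pow_nonneg hγ'.le j
      have hγij : (0:ℝ) ≤ (1 - γ) ^ (i - j - 1) := pow_nonneg hγ'.le _
      have hq1 : (0:ℝ) ≤ κ ^ 2 * (1 - γ) ^ j := mul_nonneg (by positivity) hγj
      have hq2 : (0:ℝ) ≤ 2 * κB * κ ^ 3 * (1 - γ) ^ (i - j - 1) := by
        have : (0:ℝ) ≤ 2 * κB * κ ^ 3 := by positivity
        exact mul_nonneg this hγij
      calc spec ((A - B * K) ^ j * B * blk (M (t - (j:ℤ))) ⟨i - j - 1, by omega⟩)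
          ≤ spec ((A - B * K) ^ j * B) * spec (blk (M (t - (j:ℤ))) ⟨i - j - 1, by omega⟩) :=
            spec_mul_le _ _
        _ ≤ (spec ((A - B * K) ^ j) * spec B) *
              spec (blk (M (t - (j:ℤ))) ⟨i - j - 1, by omega⟩) :=
            mul_le_mul_of_nonneg_right (spec_mul_le _ _) (spec_nonneg _)
        _ ≤ (κ ^ 2 * (1 - γ) ^ j * κB) * (2 * κB * κ ^ 3 * (1 - γ) ^ (i - j - 1)) := by
            refine mul_le_mul ?_ hMm (spec_nonneg _) (mul_nonneg hq1 hκB0)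
            exact mul_le_mul h1 hB (spec_nonneg _) hq1
        _ = 2 * κB ^ 2 * κ ^ 5 * ((1 - γ) ^ j * (1 - γ) ^ (i - j - 1)) := by ring
        _ = 2 * κB ^ 2 * κ ^ 5 * z := by
            congr 1
            rw [← pow_add]
            have hji : j + (i - j - 1) = i - 1 := by omega
            rw [hji, hz, ← zpow_natCast]
            congr 1
            omega
    · rw [dif_neg hij, if_neg hij]
      exact le_of_eq spec_zero
  -- bound on the sum
  have hsum : spec (∑ j ∈ Finset.range (h + 1),
        if hij : 1 ≤ i - j ∧ i - j ≤ H then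
          (A - B * K) ^ j * B * blk (M (t - j)) ⟨i - j - 1, by omega⟩
        else 0)
      ≤ (H:ℝ) * (2 * κB ^ 2 * κ ^ 5 * z) := by
    refine le_trans (spec_sum_le _ _) ?_
    refine le_trans (Finset.sum_le_sum hterm) ?_
    rw [← Finset.sum_filter]
    rw [Finset.sum_const, nsmul_eq_mul]
    refine mul_le_mul_of_nonneg_right ?_ hC0
    have hcard : ((Finset.range (h + 1)).filter (fun j => 1 ≤ i - j ∧ i - j ≤ H)).card ≤ H := by
      have hsub : (Finset.range (h + 1)).filter (fun j => 1 ≤ i - j ∧ i - j ≤ H)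
          ⊆ Finset.Ico (i - H) i := by
        intro j hj
        simp only [Finset.mem_filter, Finset.mem_range] at hj
        rw [Finset.mem_Ico]
        omega
      calc _ ≤ (Finset.Ico (i - H) i).card := Finset.card_le_card hsub
        _ ≤ H := by rw [Nat.card_Ico]; omega
    exact_mod_cast hcard
  have hmain : spec (Psi A B K M t i h) ≤
      (if i ≤ h then κ ^ 2 * (1 - γ) ^ i else 0) + 2 * H * κB ^ 2 * κ ^ 5 * z := by
    rw [hPsi]
    refine le_trans (spec_add_le _ _) ?_
    have : (H:ℝ) * (2 * κB ^ 2 * κ ^ 5 * z) = 2 * H * κB ^ 2 * κ ^ 5 * z := by ring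
    rw [← this]
    exact add_le_add hfirst hsum
  refine ⟨hmain, ?_⟩
  have hif : (if i ≤ h then κ ^ 2 * (1 - γ) ^ i else 0) ≤ κB ^ 2 * κ ^ 5 * z := by
    have hzz : ((1:ℝ) - γ) ^ i ≤ z := by
      rw [hz, ← zpow_natCast]
      exact zpow_le_zpow_right_of_le_one₀ hγ' hγ1' (by omega)
    have e1 : κ ^ 2 ≤ κ ^ 5 := pow_le_pow_right₀ hκ (by norm_num)
    have e2 : (1:ℝ) ≤ κB ^ 2 := by nlinarith
    have e3 : (0:ℝ) ≤ κ ^ 5 := by positivity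
    have hks : κ ^ 2 ≤ κB ^ 2 * κ ^ 5 := by nlinarith
    have h2 : κ ^ 2 * (1 - γ) ^ i ≤ κB ^ 2 * κ ^ 5 * z :=
      mul_le_mul hks hzz (pow_nonneg hγ'.le i) (by positivity)
    split
    · exact h2
    · have : (0:ℝ) ≤ κB ^ 2 * κ ^ 5 * z := by
        have : (0:ℝ) ≤ κB ^ 2 * κ ^ 5 := by positivity
        exact mul_nonneg this hz0
      linarith
  have : (2 * (H:ℝ) + 1) * κB ^ 2 * κ ^ 5 * z
      = κB ^ 2 * κ ^ 5 * z + 2 * H * κB ^ 2 * κ ^ 5 * z := by ring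
  rw [this]
  exact le_trans hmain (by linarith)
end
end
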